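/- arXiv:1907.12682 — 2 statements merged into one kernel-verified Lean document; each statement's English description precedes it below -/
import Mathlib

section
/- For the conditioned walk \widehat{S}, the process 1/a(\widehat{S}_{n \wedge \widehat{\tau}_{\mathcal{N}}}) is a martingale, where \mathcal{N} is the set of the four neighbours of the origin and \widehat{\tau}_{\mathcal{N}} is the hitting time of \mathcal{N}. Equivalently, 1/a is harmonic for \widehat{P} on \mathbb{Z}^2 \setminus (\mathcal{N} \cup \{0\}). -/
open Filter
open scoped Classical

/-- The two-dimensional integer lattice. -/
abbrev Z2 := ℤ × ℤ

/-- Euclidean norm on `Z2`. -/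
noncomputable def nrm (x : Z2) : ℝ := Real.sqrt ((x.1 : ℝ) ^ 2 + (x.2 : ℝ) ^ 2)

/-- Nearest-neighbour relation on `Z2`. -/
def nbr (x y : Z2) : Prop := (x.1 - y.1).natAbs + (x.2 - y.2).natAbs = 1

/-- `srwP n x = P_x[S_n = 0]`, the n-step probability for the simple random walk on `Z2`
to be at the origin, defined by first-step decomposition. -/
noncomputable def srwP : ℕ → Z2 → ℝ
  | 0, x => if x = 0 then 1 else 0
  | n + 1, x =>
      (srwP n (x + (1, 0)) + srwP n (x - (1, 0)) + srwP n (x + (0, 1)) + srwP n (x - (0, 1))) / 4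

/-- `a` is the potential kernel of the 2D simple random walk:
`a x = ∑_{k=0}^∞ (P_0[S_k = 0] - P_x[S_k = 0])` (convergence of the series). -/
def IsPotentialKernel (a : Z2 → ℝ) : Prop :=
  ∀ x : Z2,
    Tendsto (fun N => ∑ k ∈ Finset.range N, (srwP k 0 - srwP k x)) atTop (nhds (a x))

/-- Transition matrix of the conditioned walk `Ŝ` (Doob h-transform by `a`):
`P̂(x,y) = a(y) / (4 a(x))` when `x ∼ y`, `x ≠ 0`, `y ≠ 0`, and `0` otherwise. -/
noncomputable def Phat (a : Z2 → ℝ) (x y : Z2) : ℝ :=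
  if nbr x y ∧ x ≠ 0 ∧ y ≠ 0 then a y / (4 * a x) else 0

/-- n-step transition probabilities of the conditioned walk. -/
noncomputable def phat (a : Z2 → ℝ) : ℕ → Z2 → Z2 → ℝ
  | 0, x, y => if x = y then 1 else 0
  | n + 1, x, y => ∑' z, Phat a x z * phat a n z y

/-- Green's function of the conditioned walk: expected number of visits to `y` from `x`. -/
noncomputable def Ghat (a : Z2 → ℝ) (x y : Z2) : ℝ := ∑' n, phat a n x y

/-- `hitLE a A n x = P_x[τ̂_A ≤ n]` for the conditioned walk (entrance time, `τ̂_A = min{n ≥ 0 : Ŝ_n ∈ A}`). -/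
noncomputable def hitLE (a : Z2 → ℝ) (A : Set Z2) : ℕ → Z2 → ℝ
  | 0, x => if x ∈ A then 1 else 0
  | n + 1, x => if x ∈ A then 1 else ∑' z, Phat a x z * hitLE a A n z

/-- `hitProb a A x = P_x[τ̂_A < ∞]` for the conditioned walk. -/
noncomputable def hitProb (a : Z2 → ℝ) (A : Set Z2) (x : Z2) : ℝ := ⨆ n, hitLE a A n x

/-- `retLE a A n x = P_x[τ̂⁺_A ≤ n]`, where `τ̂⁺_A = min{n ≥ 1 : Ŝ_n ∈ A}`. -/
noncomputable def retLE (a : Z2 → ℝ) (A : Set Z2) : ℕ → Z2 → ℝ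
  | 0, _ => 0
  | n + 1, x => ∑' z, Phat a x z * hitLE a A n z

/-- `retProb a A x = P_x[τ̂⁺_A < ∞]` for the conditioned walk. -/
noncomputable def retProb (a : Z2 → ℝ) (A : Set Z2) (x : Z2) : ℝ := ⨆ n, retLE a A n x

/-- `beforeLE a A B n x = P_x[τ̂_A ≤ n and τ̂_A < τ̂_B]`. -/
noncomputable def beforeLE (a : Z2 → ℝ) (A B : Set Z2) : ℕ → Z2 → ℝ
  | 0, x => if x ∈ A then 1 else 0
  | n + 1, x =>
      if x ∈ A then 1 else if x ∈ B then 0 else ∑' z, Phat a x z * beforeLE a A B n z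

/-- `beforeProb a A B x = P_x[τ̂_A < τ̂_B]` for the conditioned walk. -/
noncomputable def beforeProb (a : Z2 → ℝ) (A B : Set Z2) (x : Z2) : ℝ := ⨆ n, beforeLE a A B n x

/-- `entLE a A y n x = P_x[τ̂_A ≤ n, Ŝ_{τ̂_A} = y]`. -/
noncomputable def entLE (a : Z2 → ℝ) (A : Set Z2) (y : Z2) : ℕ → Z2 → ℝ
  | 0, x => if x ∈ A ∧ x = y then 1 else 0
  | n + 1, x =>
      if x ∈ A then (if x = y then 1 else 0) else ∑' z, Phat a x z * entLE a A y n z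

/-- `entProb a A y x = P_x[τ̂_A < ∞, Ŝ_{τ̂_A} = y]`. -/
noncomputable def entProb (a : Z2 → ℝ) (A : Set Z2) (y x : Z2) : ℝ := ⨆ n, entLE a A y n x

/-- `visitsGE a y n t x = P_x[#{0 ≤ j ≤ t : Ŝ_j = y} ≥ n]`. -/
noncomputable def visitsGE (a : Z2 → ℝ) (y : Z2) : ℕ → ℕ → Z2 → ℝ
  | 0, _, _ => 1
  | n + 1, 0, x => if x = y ∧ n = 0 then 1 else 0
  | n + 1, t + 1, x =>
      if x = y then ∑' z, Phat a x z * visitsGE a y n t z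
      else ∑' z, Phat a x z * visitsGE a y (n + 1) t z

/-- The symmetrized Green's function `ĝ(x,y) = Ĝ(x,y)/a(y)² = (a(x)+a(y)-a(x-y))/(a(x)a(y))`. -/
noncomputable def ghat (a : Z2 → ℝ) (x y : Z2) : ℝ := (a x + a y - a (x - y)) / (a x * a y)

/-- The discrete disk `B(y, r)` in `Z2`. -/
def diskB (y : Z2) (r : ℝ) : Set Z2 := {z : Z2 | nrm (z - y) ≤ r}

/-- Inner boundary of a set of `Z2`. -/
def innerBd (A : Set Z2) : Set Z2 := {z : Z2 | z ∈ A ∧ ∃ w, nbr z w ∧ w ∉ A}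

/-- Distance from a point to a set. -/
noncomputable def distSet (x : Z2) (A : Set Z2) : ℝ := sInf ((fun y => nrm (x - y)) '' A)

/-- Diameter of a set. -/
noncomputable def diamSet (A : Set Z2) : ℝ :=
  sSup ((fun p : Z2 × Z2 => nrm (p.1 - p.2)) '' (A ×ˢ A))

/-- Escape probability from `y ∈ A` for the conditioned walk: `P_y[τ̂⁺_A = ∞]`. -/
noncomputable def hatEs (a : Z2 → ℝ) (A : Set Z2) (y : Z2) : ℝ :=
  if y ∈ A then 1 - retProb a A y else 0

/-- Capacity of a finite set for the conditioned walk. -/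
noncomputable def hatCap (a : Z2 → ℝ) (A : Finset Z2) : ℝ :=
  ∑ y ∈ A, (a y) ^ 2 * hatEs a (↑A) y

/-- Harmonic measure of the conditioned walk on a finite set. -/
noncomputable def hatHm (a : Z2 → ℝ) (A : Finset Z2) (y : Z2) : ℝ :=
  (a y) ^ 2 * hatEs a (↑A) y / hatCap a A

open Topology
lemma srwP_nonneg : ∀ (k : ℕ) (x : Z2), 0 ≤ srwP k x := by
  intro k
  induction k with
  | zero => intro x; simp [srwP]; positivity
  | succ n ih => intro x; simp only [srwP]; have := ih (x+(1,0)); have := ih (x-(1,0)); have := ih (x+(0,1)); have := ih (x-(0,1)); positivity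

lemma srwP_sum_le_one : ∀ (k : ℕ) (F : Finset Z2), ∑ x ∈ F, srwP k x ≤ 1 := by
  intro k
  induction k with
  | zero =>
    intro F
    calc ∑ x ∈ F, srwP 0 x = ∑ x ∈ F, if x = (0:Z2) then (1:ℝ) else 0 := rfl
    _ = if (0:Z2) ∈ F then (1:ℝ) else 0 := by rw [Finset.sum_ite_eq' F 0 (fun _ => (1:ℝ))]
    _ ≤ 1 := by split <;> norm_num
  | succ n ih =>
    intro F
    have key : ∀ v : Z2, ∑ x ∈ F, srwP n (x + v) ≤ 1 := by
      intro v
      have := Finset.sum_map F (addRightEmbedding v) (srwP n)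
      simp only [addRightEmbedding_apply] at this
      rw [← this]; exact ih _
    have h1 := key (1,0)
    have h2 := key (-1,0)
    have h3 := key (0,1)
    have h4 := key (0,-1)
    have e2 : ∀ x : Z2, x - (1,0) = x + (-1,0) := by intro x; ext <;> simp [sub_eq_add_neg]
    have e4 : ∀ x : Z2, x - (0,1) = x + (0,-1) := by intro x; ext <;> simp [sub_eq_add_neg]
    calc ∑ x ∈ F, srwP (n+1) x
        = (∑ x ∈ F, srwP n (x+(1,0)) + ∑ x ∈ F, srwP n (x+(-1,0)) + ∑ x ∈ F, srwP n (x+(0,1)) + ∑ x ∈ F, srwP n (x+(0,-1)))/4 := by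
          simp only [srwP, e2, e4]
          rw [← Finset.sum_add_distrib, ← Finset.sum_add_distrib, ← Finset.sum_add_distrib, ← Finset.sum_div]
    _ ≤ (1+1+1+1)/4 := by gcongr
    _ = 1 := by norm_num

noncomputable def u (x : Z2) (N : ℕ) : ℝ := ∑ k ∈ Finset.range N, (srwP k 0 - srwP k x)

lemma ha_u {a : Z2 → ℝ} (ha : IsPotentialKernel a) (x : Z2) :
    Tendsto (u x) atTop (𝓝 (a x)) := ha x

lemma sum_srwP_le : ∀ (N : ℕ) (x : Z2),
    ∑ k ∈ Finset.range N, srwP k x ≤ ∑ k ∈ Finset.range N, srwP k 0 := by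
  intro N
  induction N with
  | zero => intro x; simp
  | succ N ih =>
    intro x
    by_cases hx : x = 0
    · subst hx; exact le_refl _
    · have h0 : srwP 0 x = 0 := by simp [srwP, hx]
      have e1 := Finset.sum_range_succ' (fun k => srwP k x) N
      have e0 := Finset.sum_range_succ (fun k => srwP k 0) N
      have step : ∑ k ∈ Finset.range N, srwP (k+1) x
          = (∑ k ∈ Finset.range N, srwP k (x+(1,0)) + ∑ k ∈ Finset.range N, srwP k (x-(1,0))
            + ∑ k ∈ Finset.range N, srwP k (x+(0,1)) + ∑ k ∈ Finset.range N, srwP k (x-(0,1)))/4 := by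
        rw [← Finset.sum_add_distrib, ← Finset.sum_add_distrib, ← Finset.sum_add_distrib,
          Finset.sum_div]
        exact Finset.sum_congr rfl (fun k _ => rfl)
      have b1 := ih (x+(1,0)); have b2 := ih (x-(1,0)); have b3 := ih (x+(0,1)); have b4 := ih (x-(0,1))
      have hN0 := srwP_nonneg N 0
      rw [e1, e0]
      rw [step] at *
      rw [h0]
      linarith

lemma u_nonneg (x : Z2) (N : ℕ) : 0 ≤ u x N := by
  have := sum_srwP_le N x
  unfold u
  rw [Finset.sum_sub_distrib]
  linarith

lemma a_nonneg {a : Z2 → ℝ} (ha : IsPotentialKernel a) (x : Z2) : 0 ≤ a x :=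
  ge_of_tendsto' (ha_u ha x) (fun N => u_nonneg x N)

lemma a_zero {a : Z2 → ℝ} (ha : IsPotentialKernel a) : a 0 = 0 := by
  have h : Tendsto (u 0) atTop (𝓝 0) := by
    have : ∀ N, u 0 N = 0 := by intro N; unfold u; simp
    simpa [funext this] using (tendsto_const_nhds : Tendsto (fun _ : ℕ => (0:ℝ)) atTop (𝓝 0))
  exact tendsto_nhds_unique (ha_u ha 0) h

lemma diff_tendsto {a : Z2 → ℝ} (ha : IsPotentialKernel a) (x : Z2) :
    Tendsto (fun N => srwP N 0 - srwP N x) atTop (𝓝 0) := by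
  have h1 : Tendsto (fun N => u x (N+1)) atTop (𝓝 (a x)) :=
    (ha_u ha x).comp (tendsto_add_atTop_nat 1)
  have h2 := h1.sub (ha_u ha x)
  rw [sub_self] at h2
  have : ∀ N, u x (N+1) - u x N = srwP N 0 - srwP N x := by
    intro N; unfold u; rw [Finset.sum_range_succ]; ring
  simpa [funext this] using h2

lemma srwP_zero_tendsto {a : Z2 → ℝ} (ha : IsPotentialKernel a) :
    Tendsto (fun N => srwP N 0) atTop (𝓝 0) := by
  rw [Metric.tendsto_atTop]
  intro ε hε
  set M : ℕ := ⌈2/ε⌉₊ + 1 with hM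
  have hMpos : 0 < (M:ℝ) := by positivity
  have h2M : 2 < ε * M := by
    have h1 : 2/ε ≤ (⌈2/ε⌉₊ : ℝ) := Nat.le_ceil _
    have h2 : (⌈2/ε⌉₊ : ℝ) < M := by rw [hM]; push_cast; linarith
    have := (div_lt_iff₀ hε).mp (lt_of_le_of_lt h1 h2)
    linarith
  set F : Finset Z2 := (Finset.range M).image (fun i : ℕ => (((i : ℤ), 0) : Z2)) with hF
  have hinj : Function.Injective (fun i : ℕ => (((i : ℤ), 0) : Z2)) := by
    intro i j h
    have h2 : ((i:ℤ), (0:ℤ)) = ((j:ℤ), (0:ℤ)) := h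
    have := (Prod.ext_iff.mp h2).1
    simp at this
    exact this
  have hcard : F.card = M := by
    rw [hF, Finset.card_image_of_injective _ hinj, Finset.card_range]
  have hev : ∀ᶠ N in atTop, ∀ y ∈ F, |srwP N 0 - srwP N y| < ε/2 := by
    rw [Filter.eventually_all_finset]
    intro y _
    have := (diff_tendsto ha y)
    rw [Metric.tendsto_atTop] at this
    obtain ⟨N₀, hN₀⟩ := this (ε/2) (by linarith)
    rw [Filter.eventually_atTop]
    exact ⟨N₀, fun n hn => by simpa [Real.dist_eq] using hN₀ n hn⟩
  rw [Filter.eventually_atTop] at hev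
  obtain ⟨N₀, hN₀⟩ := hev
  refine ⟨N₀, fun N hN => ?_⟩
  have key : (M:ℝ) * srwP N 0 ≤ 1 + M * (ε/2) := by
    have hsum : ∑ y ∈ F, srwP N 0 ≤ ∑ y ∈ F, (srwP N y + ε/2) := by
      apply Finset.sum_le_sum
      intro y hy
      have := hN₀ N hN y hy
      have := abs_lt.mp this
      linarith [this.1]
    rw [Finset.sum_const, hcard, nsmul_eq_mul] at hsum
    rw [Finset.sum_add_distrib, Finset.sum_const, hcard, nsmul_eq_mul] at hsum
    have := srwP_sum_le_one N F
    linarith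
  have hpos := srwP_nonneg N 0
  have hlt : (M:ℝ) * srwP N 0 < M * ε := by
    calc (M:ℝ) * srwP N 0 ≤ 1 + M * (ε/2) := key
    _ < ε * M / 2 + M * (ε/2) := by linarith
    _ = M * ε := by ring
  have : srwP N 0 < ε := lt_of_mul_lt_mul_left hlt (le_of_lt hMpos)
  rw [Real.dist_eq]
  rw [abs_of_nonneg (by linarith [hpos])]
  simpa using this

lemma srwP_tendsto {a : Z2 → ℝ} (ha : IsPotentialKernel a) (x : Z2) :
    Tendsto (fun N => srwP N x) atTop (𝓝 0) := by
  have h := (srwP_zero_tendsto ha).sub (diff_tendsto ha x)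
  rw [sub_zero] at h
  have : ∀ N, srwP N 0 - (srwP N 0 - srwP N x) = srwP N x := by intro N; ring
  simpa [funext this] using h

lemma harm_sum (x : Z2) (N : ℕ) :
    (u (x+(1,0)) N + u (x-(1,0)) N + u (x+(0,1)) N + u (x-(0,1)) N)/4
      = u x N + srwP 0 x - srwP N x := by
  unfold u
  rw [← Finset.sum_add_distrib, ← Finset.sum_add_distrib, ← Finset.sum_add_distrib,
    Finset.sum_div]
  have step : ∀ k, ((srwP k 0 - srwP k (x+(1,0))) + (srwP k 0 - srwP k (x-(1,0)))
      + (srwP k 0 - srwP k (x+(0,1))) + (srwP k 0 - srwP k (x-(0,1))))/4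
      = (srwP k 0 - srwP k x) + (srwP k x - srwP (k+1) x) := by
    intro k
    have : srwP (k+1) x = (srwP k (x+(1,0)) + srwP k (x-(1,0)) + srwP k (x+(0,1)) + srwP k (x-(0,1)))/4 := rfl
    rw [this]; ring
  calc ∑ k ∈ Finset.range N, ((srwP k 0 - srwP k (x+(1,0))) + (srwP k 0 - srwP k (x-(1,0)))
      + (srwP k 0 - srwP k (x+(0,1))) + (srwP k 0 - srwP k (x-(0,1))))/4
      = ∑ k ∈ Finset.range N, ((srwP k 0 - srwP k x) + (srwP k x - srwP (k+1) x)) := by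
        exact Finset.sum_congr rfl (fun k _ => step k)
  _ = ∑ k ∈ Finset.range N, (srwP k 0 - srwP k x) + ∑ k ∈ Finset.range N, (srwP k x - srwP (k+1) x) := by
        rw [Finset.sum_add_distrib]
  _ = ∑ k ∈ Finset.range N, (srwP k 0 - srwP k x) + (srwP 0 x - srwP N x) := by
        rw [Finset.sum_range_sub' (fun k => srwP k x) N]
  _ = _ := by ring

lemma a_harm {a : Z2 → ℝ} (ha : IsPotentialKernel a) (x : Z2) (hx : x ≠ 0) :
    a (x+(1,0)) + a (x-(1,0)) + a (x+(0,1)) + a (x-(0,1)) = 4 * a x := by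
  have h1 : Tendsto (fun N => (u (x+(1,0)) N + u (x-(1,0)) N + u (x+(0,1)) N + u (x-(0,1)) N)/4)
      atTop (𝓝 ((a (x+(1,0)) + a (x-(1,0)) + a (x+(0,1)) + a (x-(0,1)))/4)) :=
    ((((ha_u ha _).add (ha_u ha _)).add (ha_u ha _)).add (ha_u ha _)).div_const 4
  have h0 : srwP 0 x = 0 := by simp [srwP, hx]
  have h2 : Tendsto (fun N => u x N + srwP 0 x - srwP N x) atTop (𝓝 (a x + srwP 0 x - 0)) :=
    ((ha_u ha x).add tendsto_const_nhds).sub (srwP_tendsto ha x)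
  rw [funext (harm_sum x)] at h1
  have := tendsto_nhds_unique h1 h2
  rw [h0] at this
  have h4 : (a (x+(1,0)) + a (x-(1,0)) + a (x+(0,1)) + a (x-(0,1)))/4 = a x := by
    rw [this]; ring
  linarith

lemma a_nbr_zero_sum {a : Z2 → ℝ} (ha : IsPotentialKernel a) :
    a (1,0) + a (-1,0) + a (0,1) + a (0,-1) = 4 := by
  have h1 : Tendsto (fun N => (u ((0:Z2)+(1,0)) N + u ((0:Z2)-(1,0)) N + u ((0:Z2)+(0,1)) N + u ((0:Z2)-(0,1)) N)/4)
      atTop (𝓝 ((a ((0:Z2)+(1,0)) + a ((0:Z2)-(1,0)) + a ((0:Z2)+(0,1)) + a ((0:Z2)-(0,1)))/4)) :=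
    ((((ha_u ha _).add (ha_u ha _)).add (ha_u ha _)).add (ha_u ha _)).div_const 4
  have h0 : srwP 0 (0:Z2) = 1 := by simp [srwP]
  have h2 : Tendsto (fun N => u 0 N + srwP 0 (0:Z2) - srwP N 0) atTop (𝓝 (a 0 + srwP 0 (0:Z2) - 0)) :=
    ((ha_u ha 0).add tendsto_const_nhds).sub (srwP_tendsto ha 0)
  rw [funext (harm_sum 0)] at h1
  have heq := tendsto_nhds_unique h1 h2
  rw [h0, a_zero ha] at heq
  have e1 : (0:Z2)+(1,0) = ((1,0):Z2) := by ext <;> simp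
  have e2 : (0:Z2)-(1,0) = ((-1,0):Z2) := by ext <;> simp
  have e3 : (0:Z2)+(0,1) = ((0,1):Z2) := by ext <;> simp
  have e4 : (0:Z2)-(0,1) = ((0,-1):Z2) := by ext <;> simp
  rw [e1, e2, e3, e4] at heq
  linarith

lemma srwP_neg1 : ∀ (k : ℕ) (x : Z2), srwP k (-x.1, x.2) = srwP k x := by
  intro k
  induction k with
  | zero =>
    intro x
    have : ((-x.1, x.2) : Z2) = 0 ↔ x = 0 := by
      constructor <;> intro h <;> [skip; skip] <;>
        · obtain ⟨p, q⟩ := x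
          simp [Prod.ext_iff] at h ⊢
          omega
    simp only [srwP]
    split <;> split <;> first | rfl | (rename_i h1 h2; exfalso; first | exact h2 (this.mp h1) | exact h1 (this.mpr h2))
  | succ n ih =>
    intro x
    obtain ⟨p, q⟩ := x
    have e1 : ((-p, q) : Z2) + (1,0) = (-(p-1), q) := by simp [Prod.ext_iff]; ring
    have e2 : ((-p, q) : Z2) - (1,0) = (-(p+1), q) := by simp [Prod.ext_iff]; ring
    have e3 : ((-p, q) : Z2) + (0,1) = (-p, q+1) := by simp [Prod.ext_iff]
    have e4 : ((-p, q) : Z2) - (0,1) = (-p, q-1) := by simp [Prod.ext_iff]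
    have f1 : ((p, q) : Z2) + (1,0) = (p+1, q) := by simp [Prod.ext_iff]
    have f2 : ((p, q) : Z2) - (1,0) = (p-1, q) := by simp [Prod.ext_iff]
    have f3 : ((p, q) : Z2) + (0,1) = (p, q+1) := by simp [Prod.ext_iff]
    have f4 : ((p, q) : Z2) - (0,1) = (p, q-1) := by simp [Prod.ext_iff]
    have i1 : srwP n (-(p-1), q) = srwP n (p-1, q) := ih (p-1, q)
    have i2 : srwP n (-(p+1), q) = srwP n (p+1, q) := ih (p+1, q)
    have i3 : srwP n (-p, q+1) = srwP n (p, q+1) := ih (p, q+1)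
    have i4 : srwP n (-p, q-1) = srwP n (p, q-1) := ih (p, q-1)
    show (srwP n (((-p, q) : Z2) + (1,0)) + srwP n (((-p, q) : Z2) - (1,0))
      + srwP n (((-p, q) : Z2) + (0,1)) + srwP n (((-p, q) : Z2) - (0,1)))/4
      = (srwP n (((p, q) : Z2) + (1,0)) + srwP n (((p, q) : Z2) - (1,0))
      + srwP n (((p, q) : Z2) + (0,1)) + srwP n (((p, q) : Z2) - (0,1)))/4
    rw [e1, e2, e3, e4, f1, f2, f3, f4, i1, i2, i3, i4]
    ring

lemma srwP_swap : ∀ (k : ℕ) (x : Z2), srwP k (x.2, x.1) = srwP k x := by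
  intro k
  induction k with
  | zero =>
    intro x
    have : ((x.2, x.1) : Z2) = 0 ↔ x = 0 := by
      obtain ⟨p, q⟩ := x
      simp [Prod.ext_iff]
      tauto
    simp only [srwP]
    split <;> split <;> first | rfl | (rename_i h1 h2; exfalso; first | exact h2 (this.mp h1) | exact h1 (this.mpr h2))
  | succ n ih =>
    intro x
    obtain ⟨p, q⟩ := x
    have e1 : ((q, p) : Z2) + (1,0) = (q+1, p) := by simp [Prod.ext_iff]
    have e2 : ((q, p) : Z2) - (1,0) = (q-1, p) := by simp [Prod.ext_iff]
    have e3 : ((q, p) : Z2) + (0,1) = (q, p+1) := by simp [Prod.ext_iff]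
    have e4 : ((q, p) : Z2) - (0,1) = (q, p-1) := by simp [Prod.ext_iff]
    have f1 : ((p, q) : Z2) + (1,0) = (p+1, q) := by simp [Prod.ext_iff]
    have f2 : ((p, q) : Z2) - (1,0) = (p-1, q) := by simp [Prod.ext_iff]
    have f3 : ((p, q) : Z2) + (0,1) = (p, q+1) := by simp [Prod.ext_iff]
    have f4 : ((p, q) : Z2) - (0,1) = (p, q-1) := by simp [Prod.ext_iff]
    have i1 : srwP n (q+1, p) = srwP n (p, q+1) := ih (p, q+1)
    have i2 : srwP n (q-1, p) = srwP n (p, q-1) := ih (p, q-1)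
    have i3 : srwP n (q, p+1) = srwP n (p+1, q) := ih (p+1, q)
    have i4 : srwP n (q, p-1) = srwP n (p-1, q) := ih (p-1, q)
    show (srwP n (((q, p) : Z2) + (1,0)) + srwP n (((q, p) : Z2) - (1,0))
      + srwP n (((q, p) : Z2) + (0,1)) + srwP n (((q, p) : Z2) - (0,1)))/4
      = (srwP n (((p, q) : Z2) + (1,0)) + srwP n (((p, q) : Z2) - (1,0))
      + srwP n (((p, q) : Z2) + (0,1)) + srwP n (((p, q) : Z2) - (0,1)))/4
    rw [e1, e2, e3, e4, f1, f2, f3, f4, i1, i2, i3, i4]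
    ring

lemma a_eq_of_srwP_eq {a : Z2 → ℝ} (ha : IsPotentialKernel a) {x y : Z2}
    (h : ∀ k, srwP k y = srwP k x) : a y = a x := by
  have h1 : Tendsto (u y) atTop (𝓝 (a y)) := ha_u ha y
  have h2 : ∀ N, u y N = u x N := by
    intro N; unfold u; exact Finset.sum_congr rfl (fun k _ => by rw [h k])
  rw [funext h2] at h1
  exact tendsto_nhds_unique h1 (ha_u ha x)

lemma a_one {a : Z2 → ℝ} (ha : IsPotentialKernel a) : a (1,0) = 1 := by
  have s1 : a ((-1,0) : Z2) = a (1,0) :=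
    a_eq_of_srwP_eq ha (fun k => srwP_neg1 k (1,0))
  have s2 : a ((0,1) : Z2) = a (1,0) :=
    a_eq_of_srwP_eq ha (fun k => srwP_swap k (1,0))
  have s3 : a ((0,-1) : Z2) = a (1,0) := by
    have t1 : ∀ k, srwP k ((0,-1):Z2) = srwP k ((-1,0):Z2) := fun k => srwP_swap k (-1,0)
    have t2 : ∀ k, srwP k ((-1,0):Z2) = srwP k ((1,0):Z2) := fun k => srwP_neg1 k (1,0)
    exact a_eq_of_srwP_eq ha (fun k => (t1 k).trans (t2 k))
  have := a_nbr_zero_sum ha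
  linarith

lemma a_pos_aux {a : Z2 → ℝ} (ha : IsPotentialKernel a) :
    ∀ n : ℕ, ∀ x : Z2, x.1.natAbs + x.2.natAbs = n + 1 → 0 < a x := by
  intro n
  induction n with
  | zero =>
    intro x hx
    obtain ⟨p, q⟩ := x
    simp only at hx
    have hc : (p = 1 ∧ q = 0) ∨ (p = -1 ∧ q = 0) ∨ (p = 0 ∧ q = 1) ∨ (p = 0 ∧ q = -1) := by omega
    have s1 : a ((-1,0) : Z2) = a (1,0) := a_eq_of_srwP_eq ha (fun k => srwP_neg1 k (1,0))
    have s2 : a ((0,1) : Z2) = a (1,0) := a_eq_of_srwP_eq ha (fun k => srwP_swap k (1,0))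
    have s3 : a ((0,-1) : Z2) = a (1,0) := by
      have t1 : ∀ k, srwP k ((0,-1):Z2) = srwP k ((-1,0):Z2) := fun k => srwP_swap k (-1,0)
      have t2 : ∀ k, srwP k ((-1,0):Z2) = srwP k ((1,0):Z2) := fun k => srwP_neg1 k (1,0)
      exact a_eq_of_srwP_eq ha (fun k => (t1 k).trans (t2 k))
    have h1 := a_one ha
    rcases hc with ⟨hp, hq⟩ | ⟨hp, hq⟩ | ⟨hp, hq⟩ | ⟨hp, hq⟩ <;> subst hp <;> subst hq <;> linarith
  | succ n ih =>
    intro x hx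
    obtain ⟨p, q⟩ := x
    simp only at hx
    have hx0 : ((p, q) : Z2) ≠ 0 := by
      simp [Prod.ext_iff]
      omega
    by_contra hcon
    push_neg at hcon
    have hA : a ((p,q):Z2) = 0 := le_antisymm hcon (a_nonneg ha _)
    have hharm := a_harm ha (p, q) hx0
    rw [hA] at hharm
    have f1 : ((p, q) : Z2) + (1,0) = (p+1, q) := by simp [Prod.ext_iff]
    have f2 : ((p, q) : Z2) - (1,0) = (p-1, q) := by simp [Prod.ext_iff]
    have f3 : ((p, q) : Z2) + (0,1) = (p, q+1) := by simp [Prod.ext_iff]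
    have f4 : ((p, q) : Z2) - (0,1) = (p, q-1) := by simp [Prod.ext_iff]
    rw [f1, f2, f3, f4] at hharm
    have n1 := a_nonneg ha ((p+1, q) : Z2)
    have n2 := a_nonneg ha ((p-1, q) : Z2)
    have n3 := a_nonneg ha ((p, q+1) : Z2)
    have n4 := a_nonneg ha ((p, q-1) : Z2)
    -- pick a neighbour closer to the origin
    rcases lt_trichotomy p 0 with hp | hp | hp
    · have hy : ((p+1 : ℤ)).natAbs + q.natAbs = n + 1 := by omega
      have := ih ((p+1, q) : Z2) hy
      linarith
    · subst hp
      rcases lt_trichotomy q 0 with hq | hq | hq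
      · have hy : ((0:ℤ)).natAbs + ((q+1:ℤ)).natAbs = n + 1 := by omega
        have := ih ((0, q+1) : Z2) hy
        linarith
      · omega
      · have hy : ((0:ℤ)).natAbs + ((q-1:ℤ)).natAbs = n + 1 := by omega
        have := ih ((0, q-1) : Z2) hy
        linarith
    · have hy : ((p-1 : ℤ)).natAbs + q.natAbs = n + 1 := by omega
      have := ih ((p-1, q) : Z2) hy
      linarith

lemma a_pos {a : Z2 → ℝ} (ha : IsPotentialKernel a) (x : Z2) (hx : x ≠ 0) : 0 < a x := by
  obtain ⟨p, q⟩ := x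
  have h : p.natAbs + q.natAbs ≠ 0 := by
    simp [Prod.ext_iff] at hx
    omega
  obtain ⟨n, hn⟩ : ∃ n, p.natAbs + q.natAbs = n + 1 := ⟨p.natAbs + q.natAbs - 1, by omega⟩
  exact a_pos_aux ha n (p, q) hn


/-- `1/a` is harmonic for `P̂` on `Z2 \ (𝒩 ∪ {0})`, where `𝒩` is the set of the
four neighbours of the origin; equivalently, `1/a(Ŝ_{n ∧ τ̂_𝒩})` is a martingale. -/
theorem one_div_a_harmonic (a : Z2 → ℝ) (ha : IsPotentialKernel a) :
    ∀ x : Z2, x ≠ 0 → ¬ nbr x 0 → 1 / a x = ∑' y : Z2, Phat a x y * (1 / a y) := by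
  intro x hx0 hxn
  have hax : a x ≠ 0 := ne_of_gt (a_pos ha x hx0)
  set s : Finset Z2 := {x + (1,0), x - (1,0), x + (0,1), x - (0,1)} with hs
  have hmem : ∀ y : Z2, nbr x y → y ∈ s := by
    intro y hn
    obtain ⟨p, q⟩ := x
    obtain ⟨r, t⟩ := y
    unfold nbr at hn
    simp only at hn
    simp only [hs, Finset.mem_insert, Finset.mem_singleton, Prod.ext_iff, Prod.mk_add_mk,
      Prod.mk_sub_mk, Finset.mem_singleton]
    omega
  have hvanish : ∀ y ∉ s, Phat a x y * (1 / a y) = 0 := by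
    intro y hy
    have : ¬ nbr x y := fun hn => hy (hmem y hn)
    simp [Phat, this]
  rw [tsum_eq_sum hvanish]
  have hnbr : ∀ y : Z2, nbr x y → y ≠ 0 := by
    intro y hn hy
    exact hxn (hy ▸ hn)
  have hterm : ∀ y : Z2, nbr x y → Phat a x y * (1 / a y) = 1 / (4 * a x) := by
    intro y hn
    have hy0 : y ≠ 0 := hnbr y hn
    have hay : a y ≠ 0 := ne_of_gt (a_pos ha y hy0)
    rw [Phat, if_pos ⟨hn, hx0, hy0⟩]
    field_simp
  have nb1 : nbr x (x + (1,0)) := by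
    obtain ⟨p, q⟩ := x; simp [nbr]
  have nb2 : nbr x (x - (1,0)) := by
    obtain ⟨p, q⟩ := x; simp [nbr]
  have nb3 : nbr x (x + (0,1)) := by
    obtain ⟨p, q⟩ := x; simp [nbr]
  have nb4 : nbr x (x - (0,1)) := by
    obtain ⟨p, q⟩ := x; simp [nbr]
  have d12 : x + (1,0) ≠ x - (1,0) := by
    intro h; obtain ⟨p, q⟩ := x; simp [Prod.ext_iff] at h; try omega
  have d13 : x + (1,0) ≠ x + (0,1) := by
    intro h; obtain ⟨p, q⟩ := x; simp [Prod.ext_iff] at h; try omega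
  have d14 : x + (1,0) ≠ x - (0,1) := by
    intro h; obtain ⟨p, q⟩ := x; simp [Prod.ext_iff] at h; try omega
  have d23 : x - (1,0) ≠ x + (0,1) := by
    intro h; obtain ⟨p, q⟩ := x; simp [Prod.ext_iff] at h; try omega
  have d24 : x - (1,0) ≠ x - (0,1) := by
    intro h; obtain ⟨p, q⟩ := x; simp [Prod.ext_iff] at h; try omega
  have d34 : x + (0,1) ≠ x - (0,1) := by
    intro h; obtain ⟨p, q⟩ := x; simp [Prod.ext_iff] at h; try omega
  rw [hs]
  rw [Finset.sum_insert (by simp [d12, d13, d14]),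
    Finset.sum_insert (by simp [d23, d24]),
    Finset.sum_insert (by simp [d34]),
    Finset.sum_singleton]
  rw [hterm _ nb1, hterm _ nb2, hterm _ nb3, hterm _ nb4]
  field_simp
  ring
end

section
/- For all x,y \in \mathbb{Z}^2 \setminus \{0\}, the Green's function of the conditioned walk satisfies \widehat{G}(x,y) = \frac{a(y)}{a(x)} (a(x) + a(y) - a(x-y)). -/
open Filter
open scoped Classical

namespace GF

lemma nbr_cases {x z : Z2} (h : nbr x z) :
    z = x + (1,0) ∨ z = x - (1,0) ∨ z = x + (0,1) ∨ z = x - (0,1) := by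
  obtain ⟨x1, x2⟩ := x; obtain ⟨z1, z2⟩ := z
  simp only [nbr, Prod.mk_add_mk, Prod.mk_sub_mk, Prod.mk.injEq] at h ⊢
  omega

lemma nbr_add10 (x : Z2) : nbr x (x + (1,0)) := by
  obtain ⟨x1, x2⟩ := x; simp [nbr]
lemma nbr_sub10 (x : Z2) : nbr x (x - (1,0)) := by
  obtain ⟨x1, x2⟩ := x; simp [nbr]
lemma nbr_add01 (x : Z2) : nbr x (x + (0,1)) := by
  obtain ⟨x1, x2⟩ := x; simp [nbr]
lemma nbr_sub01 (x : Z2) : nbr x (x - (0,1)) := by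
  obtain ⟨x1, x2⟩ := x; simp [nbr]

lemma tsum_four (g : Z2 → ℝ) (x : Z2)
    (h : ∀ z, ¬ nbr x z → g z = 0) :
    ∑' z, g z = g (x + (1,0)) + g (x - (1,0)) + g (x + (0,1)) + g (x - (0,1)) := by
  classical
  obtain ⟨x1, x2⟩ := x
  have hs : ∑' z, g z = ∑ z ∈ ({((x1,x2) + (1,0)), ((x1,x2) - (1,0)), ((x1,x2) + (0,1)), ((x1,x2) - (0,1))} : Finset Z2), g z := by
    refine tsum_eq_sum ?_
    intro b hb
    refine h b ?_
    intro hnb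
    rcases nbr_cases hnb with h1 | h1 | h1 | h1 <;> simp [h1] at hb
  rw [hs]
  rw [show (((x1,x2) : Z2) + (1,0)) = (x1+1, x2) by simp,
      show (((x1,x2) : Z2) - (1,0)) = (x1-1, x2) by simp [Prod.ext_iff],
      show (((x1,x2) : Z2) + (0,1)) = (x1, x2+1) by simp,
      show (((x1,x2) : Z2) - (0,1)) = (x1, x2-1) by simp [Prod.ext_iff]]
  rw [Finset.sum_insert (by intro h; simp [Prod.ext_iff] at h <;> omega),
      Finset.sum_insert (by intro h; simp [Prod.ext_iff] at h <;> omega),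
      Finset.sum_insert (by intro h; simp [Prod.ext_iff] at h <;> omega),
      Finset.sum_singleton]
  ring

lemma srwP_nonneg : ∀ n x, 0 ≤ srwP n x := by
  intro n
  induction n with
  | zero => intro x; simp [srwP]; positivity
  | succ n ih => intro x; simp only [srwP]; have := ih (x + (1,0)); have := ih (x - (1,0));
                 have := ih (x + (0,1)); have := ih (x - (0,1)); linarith

lemma srwP_le_one : ∀ n x, srwP n x ≤ 1 := by
  intro n
  induction n with
  | zero => intro x; simp [srwP]; split <;> norm_num
  | succ n ih => intro x; simp only [srwP]; have := ih (x + (1,0)); have := ih (x - (1,0));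
                 have := ih (x + (0,1)); have := ih (x - (0,1)); linarith

lemma srwP_parity : ∀ n x, ¬ (2 ∣ (n + (x.1 + x.2).natAbs)) → srwP n x = 0 := by
  intro n
  induction n with
  | zero =>
    intro x hx
    simp only [srwP]
    rw [if_neg]
    rintro rfl; simp at hx
  | succ n ih =>
    intro x hx
    have h1 : srwP n (x + (1,0)) = 0 := by
      refine ih _ ?_; obtain ⟨x1,x2⟩ := x; simp at hx ⊢; omega
    have h2 : srwP n (x - (1,0)) = 0 := by
      refine ih _ ?_; obtain ⟨x1,x2⟩ := x; simp at hx ⊢; omega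
    have h3 : srwP n (x + (0,1)) = 0 := by
      refine ih _ ?_; obtain ⟨x1,x2⟩ := x; simp at hx ⊢; omega
    have h4 : srwP n (x - (0,1)) = 0 := by
      refine ih _ ?_; obtain ⟨x1,x2⟩ := x; simp at hx ⊢; omega
    simp [srwP, h1, h2, h3, h4]

lemma srwP_neg : ∀ n x, srwP n (-x) = srwP n x := by
  intro n
  induction n with
  | zero => intro x; simp [srwP, neg_eq_zero]
  | succ n ih =>
    intro x
    have e1 : -x + (1,0) = -(x - (1,0)) := by ring
    have e2 : -x - (1,0) = -(x + (1,0)) := by ring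
    have e3 : -x + (0,1) = -(x - (0,1)) := by ring
    have e4 : -x - (0,1) = -(x + (0,1)) := by ring
    simp only [srwP, e1, e2, e3, e4, ih]
    ring

lemma srwP_swap : ∀ n x, srwP n (x.2, x.1) = srwP n x := by
  intro n
  induction n with
  | zero => intro x; obtain ⟨x1,x2⟩ := x; simp [srwP, Prod.ext_iff, and_comm]
  | succ n ih =>
    intro x
    obtain ⟨x1, x2⟩ := x
    have e1 : ((x1,x2) : Z2) + (1,0) = (x1+1, x2) := by simp
    have e2 : ((x1,x2) : Z2) - (1,0) = (x1-1, x2) := by simp [Prod.ext_iff]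
    have e3 : ((x1,x2) : Z2) + (0,1) = (x1, x2+1) := by simp
    have e4 : ((x1,x2) : Z2) - (0,1) = (x1, x2-1) := by simp [Prod.ext_iff]
    simp only [srwP, e1, e2, e3, e4]
    have i1 := ih (x2+1, x1)
    have i2 := ih (x2-1, x1)
    have i3 := ih (x2, x1+1)
    have i4 := ih (x2, x1-1)
    simp only at i1 i2 i3 i4
    rw [show ((x2,x1) : Z2) + (1,0) = (x2+1, x1) by simp,
        show ((x2,x1) : Z2) - (1,0) = (x2-1, x1) by simp [Prod.ext_iff],
        show ((x2,x1) : Z2) + (0,1) = (x2, x1+1) by simp,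
        show ((x2,x1) : Z2) - (0,1) = (x2, x1-1) by simp [Prod.ext_iff]]
    rw [i1, i2, i3, i4]
    ring

/-- first passage to 0 at time exactly n -/
noncomputable def fp : ℕ → Z2 → ℝ
  | 0, x => if x = 0 then 1 else 0
  | n + 1, x => if x = 0 then 0 else
      (fp n (x + (1, 0)) + fp n (x - (1, 0)) + fp n (x + (0, 1)) + fp n (x - (0, 1))) / 4

lemma fp_nonneg : ∀ n x, 0 ≤ fp n x := by
  intro n
  induction n with
  | zero => intro x; simp only [fp]; split <;> norm_num
  | succ n ih =>
    intro x; simp only [fp]; split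
    · exact le_refl 0
    · have := ih (x + (1,0)); have := ih (x - (1,0))
      have := ih (x + (0,1)); have := ih (x - (0,1)); linarith

lemma fp_zero : ∀ n, fp n 0 = if n = 0 then 1 else 0 := by
  intro n; cases n <;> simp [fp]

/-- killed walk n-step probability from x to y (avoiding 0) -/
noncomputable def qk : ℕ → Z2 → Z2 → ℝ
  | 0, x, y => if x = y then 1 else 0
  | n + 1, x, y => if x = 0 then 0 else
      ((if x + (1,0) = 0 then 0 else qk n (x + (1,0)) y) +
       (if x - (1,0) = 0 then 0 else qk n (x - (1,0)) y) +
       (if x + (0,1) = 0 then 0 else qk n (x + (0,1)) y) +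
       (if x - (0,1) = 0 then 0 else qk n (x - (0,1)) y)) / 4

lemma qk_nonneg : ∀ n x y, 0 ≤ qk n x y := by
  intro n
  induction n with
  | zero => intro x y; simp only [qk]; split <;> norm_num
  | succ n ih =>
    intro x y; simp only [qk]; split
    · exact le_refl 0
    · have h1 : (0:ℝ) ≤ (if x + (1,0) = 0 then 0 else qk n (x + (1,0)) y) := by
        split; exact le_refl 0; exact ih _ _
      have h2 : (0:ℝ) ≤ (if x - (1,0) = 0 then 0 else qk n (x - (1,0)) y) := by
        split; exact le_refl 0; exact ih _ _
      have h3 : (0:ℝ) ≤ (if x + (0,1) = 0 then 0 else qk n (x + (0,1)) y) := by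
        split; exact le_refl 0; exact ih _ _
      have h4 : (0:ℝ) ≤ (if x - (0,1) = 0 then 0 else qk n (x - (0,1)) y) := by
        split; exact le_refl 0; exact ih _ _
      linarith

lemma qk_from_zero {y : Z2} (hy : y ≠ 0) : ∀ n, qk n 0 y = 0 := by
  intro n; cases n with
  | zero => simp [qk, hy.symm]
  | succ n => simp [qk]

lemma qk_kill {y : Z2} (hy : y ≠ 0) (n : ℕ) (z : Z2) :
    (if z = 0 then (0:ℝ) else qk n z y) = qk n z y := by
  split
  · rename_i h; rw [h, qk_from_zero hy]
  · rfl

/-- first-passage decomposition: paths from x to y either avoid 0 or hit it first at time j. -/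
lemma fp_decomp {y : Z2} (hy : y ≠ 0) :
    ∀ n x, srwP n (x - y) =
      qk n x y + ∑ j ∈ Finset.range (n+1), fp j x * srwP (n - j) (-y) := by
  intro n
  induction n with
  | zero =>
    intro x
    have h1 : srwP 0 (-y) = 0 := by simp [srwP, neg_eq_zero, hy]
    rw [Finset.range_one, Finset.sum_singleton]
    simp only [Nat.sub_zero, h1, mul_zero, add_zero]
    simp [srwP, qk, sub_eq_zero]
  | succ n ih =>
    intro x
    by_cases hx : x = 0
    · subst hx
      rw [qk_from_zero hy]
      have hfp : ∀ j, fp j 0 * srwP (n + 1 - j) (-y) =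
          (if j = 0 then srwP (n+1) (-y) else 0) := by
        intro j
        rw [fp_zero]
        split <;> simp_all
      rw [Finset.sum_congr rfl (fun j _ => hfp j)]
      rw [Finset.sum_ite_eq' (Finset.range (n+2)) 0 (fun _ => srwP (n+1) (-y))]
      simp [zero_sub, srwP_neg]
    · -- x ≠ 0
      have key : srwP (n+1) (x - y) =
          (srwP n ((x + (1,0)) - y) + srwP n ((x - (1,0)) - y) +
           srwP n ((x + (0,1)) - y) + srwP n ((x - (0,1)) - y)) / 4 := by
        simp only [srwP]
        congr 2 <;> congr 1 <;> ring
      rw [key, ih (x + (1,0)), ih (x - (1,0)), ih (x + (0,1)), ih (x - (0,1))]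
      -- RHS : qk (n+1) x y + ∑_{j<n+2} fp j x * srwP (n+1-j) (-y)
      have hq : qk (n+1) x y =
          (qk n (x + (1,0)) y + qk n (x - (1,0)) y + qk n (x + (0,1)) y + qk n (x - (0,1)) y) / 4 := by
        simp only [qk, if_neg hx, qk_kill hy]
      have hsum : ∑ j ∈ Finset.range (n+2), fp j x * srwP (n + 1 - j) (-y) =
          (∑ j ∈ Finset.range (n+1), fp j (x + (1,0)) * srwP (n - j) (-y) +
           ∑ j ∈ Finset.range (n+1), fp j (x - (1,0)) * srwP (n - j) (-y) +
           ∑ j ∈ Finset.range (n+1), fp j (x + (0,1)) * srwP (n - j) (-y) +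
           ∑ j ∈ Finset.range (n+1), fp j (x - (0,1)) * srwP (n - j) (-y)) / 4 := by
        rw [Finset.sum_range_succ' (fun j => fp j x * srwP (n + 1 - j) (-y))]
        have h0 : fp 0 x = 0 := by simp [fp, hx]
        rw [h0]
        have hstep : ∀ j, fp (j+1) x =
            (fp j (x + (1,0)) + fp j (x - (1,0)) + fp j (x + (0,1)) + fp j (x - (0,1))) / 4 := by
          intro j; simp only [fp, if_neg hx]
        have : ∀ j ∈ Finset.range (n+1), fp (j+1) x * srwP (n + 1 - (j+1)) (-y) =
            (fp j (x + (1,0)) * srwP (n - j) (-y) + fp j (x - (1,0)) * srwP (n - j) (-y) +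
             fp j (x + (0,1)) * srwP (n - j) (-y) + fp j (x - (0,1)) * srwP (n - j) (-y)) / 4 := by
          intro j _
          rw [hstep j]
          have : n + 1 - (j + 1) = n - j := by omega
          rw [this]; ring
        rw [Finset.sum_congr rfl this]
        rw [← Finset.sum_div, Finset.sum_add_distrib, Finset.sum_add_distrib, Finset.sum_add_distrib]
        ring
      rw [hq, hsum]
      ring

/-- simple decomposition through the origin (target 0) -/
lemma fp_decomp0 : ∀ n (x : Z2), srwP n x = ∑ j ∈ Finset.range (n+1), fp j x * srwP (n - j) 0 := by
  intro n
  induction n with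
  | zero =>
    intro x
    rw [Finset.range_one, Finset.sum_singleton]
    simp [srwP, fp]
  | succ n ih =>
    intro x
    by_cases hx : x = 0
    · subst hx
      have hfp : ∀ j, fp j (0:Z2) * srwP (n + 1 - j) 0 =
          (if j = 0 then srwP (n+1) (0:Z2) else 0) := by
        intro j
        rw [fp_zero]
        split <;> simp_all
      rw [Finset.sum_congr rfl (fun j _ => hfp j)]
      rw [Finset.sum_ite_eq' (Finset.range (n+2)) 0 (fun _ => srwP (n+1) (0:Z2))]
      simp
    · have key : srwP (n+1) x =
          (srwP n (x + (1,0)) + srwP n (x - (1,0)) + srwP n (x + (0,1)) + srwP n (x - (0,1))) / 4 := by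
        simp only [srwP]
      rw [key, ih (x + (1,0)), ih (x - (1,0)), ih (x + (0,1)), ih (x - (0,1))]
      rw [Finset.sum_range_succ' (fun j => fp j x * srwP (n + 1 - j) 0)]
      have h0 : fp 0 x = 0 := by simp [fp, hx]
      rw [h0]
      have hstep : ∀ j, fp (j+1) x =
          (fp j (x + (1,0)) + fp j (x - (1,0)) + fp j (x + (0,1)) + fp j (x - (0,1))) / 4 := by
        intro j; simp only [fp, if_neg hx]
      have hc : ∀ j ∈ Finset.range (n+1), fp (j+1) x * srwP (n + 1 - (j+1)) 0 =
          (fp j (x + (1,0)) * srwP (n - j) 0 + fp j (x - (1,0)) * srwP (n - j) 0 +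
           fp j (x + (0,1)) * srwP (n - j) 0 + fp j (x - (0,1)) * srwP (n - j) 0) / 4 := by
        intro j _
        rw [hstep j]
        have : n + 1 - (j + 1) = n - j := by omega
        rw [this]; ring
      rw [Finset.sum_congr rfl hc]
      rw [← Finset.sum_div, Finset.sum_add_distrib, Finset.sum_add_distrib, Finset.sum_add_distrib]
      ring

/-- partial green function at origin -/
noncomputable def GN (N : ℕ) : ℝ := ∑ n ∈ Finset.range N, srwP n 0

/-- partial potential-kernel sums -/
noncomputable def AA (N : ℕ) (x : Z2) : ℝ := ∑ k ∈ Finset.range N, (srwP k 0 - srwP k x)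

lemma GN_nonneg (N : ℕ) : 0 ≤ GN N :=
  Finset.sum_nonneg fun n _ => srwP_nonneg n 0

lemma GN_mono : Monotone GN := by
  intro M N h
  exact Finset.sum_le_sum_of_subset_of_nonneg (Finset.range_subset_range.mpr h)
    (fun n _ _ => srwP_nonneg n 0)

/-- generic swap of the convolution double sum -/
lemma swap_sum (c : ℕ → ℝ) (x : Z2) :
    ∀ N, ∑ n ∈ Finset.range N, ∑ j ∈ Finset.range (n+1), fp j x * c (n - j) =
      ∑ j ∈ Finset.range N, fp j x * ∑ i ∈ Finset.range (N - j), c i := by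
  intro N
  induction N with
  | zero => simp
  | succ N ih =>
    rw [Finset.sum_range_succ, ih]
    have hR : ∑ j ∈ Finset.range (N+1), fp j x * ∑ i ∈ Finset.range (N + 1 - j), c i =
        ∑ j ∈ Finset.range (N+1), (fp j x * ∑ i ∈ Finset.range (N - j), c i + fp j x * c (N - j)) := by
      refine Finset.sum_congr rfl fun j hj => ?_
      have hj' : j ≤ N := by simpa [Nat.lt_succ_iff] using hj
      have : N + 1 - j = (N - j) + 1 := by omega
      rw [this, Finset.sum_range_succ]
      ring
    rw [hR, Finset.sum_add_distrib]
    have hL : ∑ j ∈ Finset.range (N+1), fp j x * ∑ i ∈ Finset.range (N - j), c i =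
        ∑ j ∈ Finset.range N, fp j x * ∑ i ∈ Finset.range (N - j), c i := by
      rw [Finset.sum_range_succ]
      simp
    rw [hL]

lemma fp_partial_le_one : ∀ N (x : Z2), ∑ j ∈ Finset.range N, fp j x ≤ 1 := by
  intro N
  induction N with
  | zero => intro x; simp
  | succ N ih =>
    intro x
    by_cases hx : x = 0
    · subst hx
      have : ∀ j ∈ Finset.range (N+1), fp j (0:Z2) = if j = 0 then 1 else 0 := fun j _ => fp_zero j
      rw [Finset.sum_congr rfl this, Finset.sum_ite_eq' (Finset.range (N+1)) 0 (fun _ => (1:ℝ))]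
      simp
    · rw [Finset.sum_range_succ' (fun j => fp j x)]
      have h0 : fp 0 x = 0 := by simp [fp, hx]
      have hstep : ∀ j, fp (j+1) x =
          (fp j (x + (1,0)) + fp j (x - (1,0)) + fp j (x + (0,1)) + fp j (x - (0,1))) / 4 := by
        intro j; simp only [fp, if_neg hx]
      rw [h0, Finset.sum_congr rfl (fun j _ => hstep j)]
      rw [← Finset.sum_div, Finset.sum_add_distrib, Finset.sum_add_distrib, Finset.sum_add_distrib]
      have i1 := ih (x + (1,0)); have i2 := ih (x - (1,0))
      have i3 := ih (x + (0,1)); have i4 := ih (x - (0,1))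
      linarith

lemma sum_srwP_eq (N : ℕ) (x : Z2) :
    ∑ n ∈ Finset.range N, srwP n x = ∑ j ∈ Finset.range N, fp j x * GN (N - j) := by
  have h1 : ∀ n ∈ Finset.range N, srwP n x =
      ∑ j ∈ Finset.range (n+1), fp j x * srwP (n - j) 0 := fun n _ => fp_decomp0 n x
  rw [Finset.sum_congr rfl h1, swap_sum (fun i => srwP i 0) x N]
  rfl

lemma AA_eq (N : ℕ) (x : Z2) :
    AA N x = GN N - ∑ j ∈ Finset.range N, fp j x * GN (N - j) := by
  rw [AA, Finset.sum_sub_distrib, ← GN, sum_srwP_eq]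

lemma AA_nonneg (N : ℕ) (x : Z2) : 0 ≤ AA N x := by
  rw [AA_eq]
  have h1 : ∑ j ∈ Finset.range N, fp j x * GN (N - j) ≤
      ∑ j ∈ Finset.range N, fp j x * GN N := by
    refine Finset.sum_le_sum fun j _ => ?_
    exact mul_le_mul_of_nonneg_left (GN_mono (Nat.sub_le N j)) (fp_nonneg j x)
  have h2 : ∑ j ∈ Finset.range N, fp j x * GN N ≤ GN N := by
    rw [← Finset.sum_mul]
    nlinarith [fp_partial_le_one N x, GN_nonneg N,
      Finset.sum_nonneg (fun j (_ : j ∈ Finset.range N) => fp_nonneg j x)]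
  linarith

/-- 1D simple random walk kernel -/
noncomputable def bb : ℕ → ℤ → ℝ
  | 0, k => if k = 0 then 1 else 0
  | n + 1, k => (bb n (k + 1) + bb n (k - 1)) / 2

lemma srwP_eq_bb : ∀ n (x : Z2), srwP n x = bb n (x.1 + x.2) * bb n (x.1 - x.2) := by
  intro n
  induction n with
  | zero =>
    intro x
    obtain ⟨x1, x2⟩ := x
    simp only [srwP, bb, Prod.mk_eq_zero]
    by_cases ha : x1 + x2 = 0 <;> by_cases hb : x1 - x2 = 0
    · have h1 : x1 = 0 := by omega
      have h2 : x2 = 0 := by omega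
      simp [h1, h2]
    · rw [if_neg (by omega), if_pos ha, if_neg hb]; ring
    · rw [if_neg (by omega), if_neg ha, if_pos hb]; ring
    · rw [if_neg (by omega), if_neg ha, if_neg hb]; ring
  | succ n ih =>
    intro x
    obtain ⟨x1, x2⟩ := x
    have e1 : ((x1,x2) : Z2) + (1,0) = (x1+1, x2) := by simp
    have e2 : ((x1,x2) : Z2) - (1,0) = (x1-1, x2) := by simp [Prod.ext_iff]
    have e3 : ((x1,x2) : Z2) + (0,1) = (x1, x2+1) := by simp
    have e4 : ((x1,x2) : Z2) - (0,1) = (x1, x2-1) := by simp [Prod.ext_iff]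
    simp only [srwP, e1, e2, e3, e4, ih]
    simp only [bb]
    push_cast
    ring_nf

lemma bb_vanish : ∀ n (k : ℤ), n < k.natAbs → bb n k = 0 := by
  intro n
  induction n with
  | zero =>
    intro k hk
    have : k ≠ 0 := by omega
    simp [bb, this]
  | succ n ih =>
    intro k hk
    have h1 : bb n (k+1) = 0 := by refine ih _ ?_; omega
    have h2 : bb n (k-1) = 0 := by refine ih _ ?_; omega
    simp [bb, h1, h2]

lemma bb_neg : ∀ n (k : ℤ), bb n (-k) = bb n k := by
  intro n
  induction n with
  | zero => intro k; simp [bb, neg_eq_zero]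
  | succ n ih =>
    intro k
    have e1 : -k + 1 = -(k - 1) := by ring
    have e2 : -k - 1 = -(k + 1) := by ring
    simp only [bb, e1, e2, ih]
    ring

lemma bb_closed : ∀ n m, m ≤ n → bb n ((n : ℤ) - 2 * m) = (n.choose m : ℝ) / 2 ^ n := by
  intro n
  induction n with
  | zero =>
    intro m hm
    interval_cases m
    simp [bb]
  | succ n ih =>
    intro m hm
    have hbn : bb n (n:ℤ) = 1 / 2 ^ n := by
      have h2 := ih 0 (Nat.zero_le n)
      norm_num at h2
      simpa using h2
    cases m with
    | zero =>
      rw [show ((n+1 : ℕ) : ℤ) - 2 * ((0:ℕ):ℤ) = (n : ℤ) + 1 by push_cast; ring]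
      simp only [bb]
      rw [show (n:ℤ) + 1 + 1 = (n:ℤ) + 2 by ring, show (n:ℤ) + 1 - 1 = (n:ℤ) by ring]
      rw [bb_vanish n ((n:ℤ)+2) (by omega), hbn]
      rw [Nat.choose_zero_right, pow_succ]
      norm_num
      ring
    | succ k =>
      have hk : k ≤ n := by omega
      by_cases hkn : k + 1 ≤ n
      · rw [show ((n+1 : ℕ) : ℤ) - 2 * ((k+1:ℕ):ℤ) = (n : ℤ) - 2 * (k:ℤ) - 1 by push_cast; ring]
        simp only [bb]
        rw [show (n:ℤ) - 2 * (k:ℤ) - 1 + 1 = (n:ℤ) - 2 * (k:ℕ) by push_cast; ring,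
            show (n:ℤ) - 2 * (k:ℤ) - 1 - 1 = (n:ℤ) - 2 * ((k+1:ℕ):ℤ) by push_cast; ring]
        rw [ih k hk, ih (k+1) hkn]
        rw [Nat.choose_succ_succ n k]
        push_cast
        rw [pow_succ]
        ring
      · have hkeq : k = n := by omega
        subst hkeq
        rw [show ((k+1 : ℕ) : ℤ) - 2 * ((k+1:ℕ):ℤ) = -(k:ℤ) - 1 by push_cast; ring]
        simp only [bb]
        rw [show -(k:ℤ) - 1 + 1 = -(k:ℤ) by ring, show -(k:ℤ) - 1 - 1 = -((k:ℤ)+2) by ring]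
        rw [bb_neg k (k:ℤ), bb_neg k ((k:ℤ)+2)]
        rw [hbn, bb_vanish k ((k:ℤ)+2) (by omega)]
        rw [Nat.choose_self, pow_succ]
        norm_num
        ring

lemma srwP_two_n_zero (n : ℕ) :
    srwP (2 * n) 0 = ((Nat.centralBinom n : ℝ) / 4 ^ n) ^ 2 := by
  rw [srwP_eq_bb (2*n) 0]
  have h0 : ((0:Z2).1 + (0:Z2).2) = 0 := rfl
  have h0' : ((0:Z2).1 - (0:Z2).2) = 0 := rfl
  rw [h0, h0']
  have : (0:ℤ) = ((2*n : ℕ) : ℤ) - 2 * (n:ℕ) := by push_cast; ring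
  rw [this, bb_closed (2*n) n (by omega)]
  rw [Nat.centralBinom]
  have h4 : (2:ℝ) ^ (2*n) = 4 ^ n := by
    rw [pow_mul]; norm_num
  rw [h4]
  ring

lemma centralBinom_sq_bound : ∀ n, 1 ≤ n → 16 ^ n ≤ 4 * n * (Nat.centralBinom n) ^ 2 := by
  intro n
  induction n with
  | zero => intro h; omega
  | succ n ih =>
    intro _
    by_cases hn : 1 ≤ n
    · have IH := ih hn
      have key : (n + 1) * Nat.centralBinom (n+1) = 2 * (2*n+1) * Nat.centralBinom n :=
        Nat.succ_mul_centralBinom_succ n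
      -- multiply target by (n+1)^2 * n
      have step : 16 ^ (n+1) * ((n+1)^2 * n) ≤ (4 * (n+1) * (Nat.centralBinom (n+1))^2) * ((n+1)^2 * n) := by
        have lhs_eq : (4 * (n+1) * (Nat.centralBinom (n+1))^2) * ((n+1)^2 * n) =
            4 * n * ((n+1) * Nat.centralBinom (n+1))^2 * (n+1) := by ring
        rw [lhs_eq, key]
        have expand : 4 * n * (2 * (2*n+1) * Nat.centralBinom n)^2 * (n+1) =
            (4 * (2*n+1)^2 * (n+1)) * (4 * n * (Nat.centralBinom n)^2) := by ring
        rw [expand]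
        calc 16 ^ (n+1) * ((n+1)^2 * n)
            = (16 * (n+1)^2 * n) * 16 ^ n := by ring
          _ ≤ (4 * (2*n+1)^2 * (n+1)) * 16 ^ n := by
              have : 16 * (n+1)^2 * n ≤ 4 * (2*n+1)^2 * (n+1) := by nlinarith
              exact Nat.mul_le_mul_right _ this
          _ ≤ (4 * (2*n+1)^2 * (n+1)) * (4 * n * (Nat.centralBinom n)^2) :=
              Nat.mul_le_mul_left _ IH
      have hpos : 0 < (n+1)^2 * n := by positivity
      exact Nat.le_of_mul_le_mul_right step hpos
    · have hn0 : n = 0 := by omega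
      subst hn0
      norm_num [Nat.centralBinom]

lemma srwP_lower (n : ℕ) (hn : 1 ≤ n) : 1 / (4 * (n:ℝ)) ≤ srwP (2 * n) 0 := by
  rw [srwP_two_n_zero]
  have h := centralBinom_sq_bound n hn
  have hc : (16:ℝ) ^ n ≤ 4 * n * (Nat.centralBinom n : ℝ)^2 := by
    exact_mod_cast h
  have h16 : ((4:ℝ) ^ n)^2 = 16 ^ n := by
    rw [← pow_mul, mul_comm, pow_mul]
    norm_num
  rw [div_pow, h16]
  rw [div_le_div_iff₀ (by positivity) (by positivity)]
  nlinarith [pow_pos (show (0:ℝ) < 16 by norm_num) n]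

lemma GN_unbounded : Tendsto GN atTop atTop := by
  refine tendsto_atTop_atTop_of_monotone GN_mono ?_
  intro M
  -- harmonic series diverges
  have hh := Real.tendsto_sum_range_one_div_nat_succ_atTop
  obtain ⟨N, hN⟩ := (hh.eventually_ge_atTop (4 * M)).exists
  refine ⟨2 * N + 1, ?_⟩
  have key : ∑ i ∈ Finset.range N, 1 / ((i:ℝ) + 1) ≤ 4 * GN (2 * N + 1) := by
    have h1 : ∑ i ∈ Finset.range N, 1 / ((i:ℝ) + 1) ≤
        ∑ i ∈ Finset.range N, 4 * srwP (2 * (i+1)) 0 := by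
      refine Finset.sum_le_sum fun i _ => ?_
      have := srwP_lower (i+1) (by omega)
      have h4 : (0:ℝ) < 4 * ((i:ℝ)+1) := by positivity
      calc 1 / ((i:ℝ) + 1) = 4 * (1 / (4 * ((i:ℝ)+1))) := by field_simp
        _ ≤ 4 * srwP (2 * (i+1)) 0 := by
            have : ((i:ℝ)+1) = ((i+1 : ℕ) : ℝ) := by push_cast; ring
            rw [this]
            linarith [srwP_lower (i+1) (by omega)]
    refine h1.trans ?_
    rw [← Finset.mul_sum]
    have h2 : ∑ i ∈ Finset.range N, srwP (2 * (i+1)) 0 ≤ GN (2 * N + 1) := by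
      have himg : ∑ i ∈ Finset.range N, srwP (2 * (i+1)) 0 =
          ∑ k ∈ (Finset.range N).image (fun i => 2 * (i+1)), srwP k 0 := by
        rw [Finset.sum_image]
        intro i _ j _ h
        simp only at h
        omega
      rw [himg, GN]
      refine Finset.sum_le_sum_of_subset_of_nonneg ?_ (fun k _ _ => srwP_nonneg k 0)
      intro k hk
      simp only [Finset.mem_image, Finset.mem_range] at hk ⊢
      obtain ⟨i, hi, rfl⟩ := hk
      omega
    linarith
  linarith
section PotKernel

variable {a : Z2 → ℝ}

def IsPK (a : Z2 → ℝ) : Prop :=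
  ∀ x : Z2,
    Tendsto (fun N => ∑ k ∈ Finset.range N, (srwP k 0 - srwP k x)) atTop (nhds (a x))

lemma tendsto_AA (ha : IsPK a) (x : Z2) : Tendsto (fun N => AA N x) atTop (nhds (a x)) := ha x

lemma a_zero (ha : IsPK a) : a 0 = 0 := by
  have h1 := tendsto_AA ha 0
  have h2 : ∀ N, AA N (0:Z2) = 0 := by intro N; simp [AA]
  have h3 : Tendsto (fun N => AA N (0:Z2)) atTop (nhds 0) := by
    simp only [h2]; exact tendsto_const_nhds
  exact tendsto_nhds_unique h1 h3

lemma a_nonneg (ha : IsPK a) (x : Z2) : 0 ≤ a x :=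
  le_of_tendsto_of_tendsto' tendsto_const_nhds (tendsto_AA ha x) (fun N => AA_nonneg N x)

lemma a_neg (ha : IsPK a) (x : Z2) : a (-x) = a x := by
  have h1 := tendsto_AA ha (-x)
  have h2 : ∀ N, AA N (-x) = AA N x := by
    intro N; unfold AA; refine Finset.sum_congr rfl fun k _ => ?_; rw [srwP_neg]
  rw [show (fun N => AA N (-x)) = fun N => AA N x from funext h2] at h1
  exact tendsto_nhds_unique h1 (tendsto_AA ha x)

lemma a_swap (ha : IsPK a) (x : Z2) : a (x.2, x.1) = a x := by
  have h1 := tendsto_AA ha (x.2, x.1)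
  have h2 : ∀ N, AA N (x.2, x.1) = AA N x := by
    intro N; unfold AA; refine Finset.sum_congr rfl fun k _ => ?_; rw [srwP_swap]
  rw [show (fun N => AA N (x.2, x.1)) = fun N => AA N x from funext h2] at h1
  exact tendsto_nhds_unique h1 (tendsto_AA ha x)

lemma AA_sum_nbrs (N : ℕ) (x : Z2) :
    AA N (x + (1,0)) + AA N (x - (1,0)) + AA N (x + (0,1)) + AA N (x - (0,1)) =
      4 * AA N x + 4 * (if x = 0 then 1 else 0) - 4 * srwP N x := by
  unfold AA
  have key : ∀ k, (srwP k 0 - srwP k (x + (1,0))) + (srwP k 0 - srwP k (x - (1,0))) +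
      (srwP k 0 - srwP k (x + (0,1))) + (srwP k 0 - srwP k (x - (0,1))) =
      4 * srwP k 0 - 4 * srwP (k+1) x := by
    intro k
    have : srwP (k+1) x = (srwP k (x + (1,0)) + srwP k (x - (1,0)) + srwP k (x + (0,1)) + srwP k (x - (0,1))) / 4 := by
      simp only [srwP]
    rw [this]; ring
  have lhs_eq : ∑ k ∈ Finset.range N, (srwP k 0 - srwP k (x + (1,0))) +
      ∑ k ∈ Finset.range N, (srwP k 0 - srwP k (x - (1,0))) +
      ∑ k ∈ Finset.range N, (srwP k 0 - srwP k (x + (0,1))) +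
      ∑ k ∈ Finset.range N, (srwP k 0 - srwP k (x - (0,1))) =
      ∑ k ∈ Finset.range N, (4 * srwP k 0 - 4 * srwP (k+1) x) := by
    rw [← Finset.sum_add_distrib, ← Finset.sum_add_distrib, ← Finset.sum_add_distrib]
    exact Finset.sum_congr rfl fun k _ => key k
  rw [lhs_eq]
  have shift : ∑ k ∈ Finset.range N, srwP (k+1) x =
      ∑ k ∈ Finset.range N, srwP k x + srwP N x - srwP 0 x := by
    have := Finset.sum_range_succ' (fun k => srwP k x) N
    have h2 := Finset.sum_range_succ (fun k => srwP k x) N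
    -- ∑_{k<N+1} srwP k x = ∑_{k<N} srwP (k+1) x + srwP 0 x  and  = ∑_{k<N} srwP k x + srwP N x
    linarith [this, h2]
  rw [Finset.sum_sub_distrib]
  rw [← Finset.mul_sum, ← Finset.mul_sum, shift]
  have h0 : srwP 0 x = if x = 0 then 1 else 0 := by simp [srwP]
  rw [h0, Finset.sum_sub_distrib]
  ring

lemma a_harmonic (ha : IsPK a) (x : Z2) :
    a (x + (1,0)) + a (x - (1,0)) + a (x + (0,1)) + a (x - (0,1)) =
      4 * a x + 4 * (if x = 0 then 1 else 0) := by
  set δ : ℝ := if x = 0 then 1 else 0 with hδ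
  have hsum : Tendsto (fun N => AA N (x + (1,0)) + AA N (x - (1,0)) + AA N (x + (0,1)) + AA N (x - (0,1)))
      atTop (nhds (a (x + (1,0)) + a (x - (1,0)) + a (x + (0,1)) + a (x - (0,1)))) :=
    (((tendsto_AA ha _).add (tendsto_AA ha _)).add (tendsto_AA ha _)).add (tendsto_AA ha _)
  have hsrw : Tendsto (fun N => srwP N x) atTop
      (nhds (a x + δ - (a (x + (1,0)) + a (x - (1,0)) + a (x + (0,1)) + a (x - (0,1))) / 4)) := by
    have h1 : Tendsto (fun N => AA N x + δ -
        (AA N (x + (1,0)) + AA N (x - (1,0)) + AA N (x + (0,1)) + AA N (x - (0,1))) / 4) atTop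
        (nhds (a x + δ - (a (x + (1,0)) + a (x - (1,0)) + a (x + (0,1)) + a (x - (0,1))) / 4)) :=
      (((tendsto_AA ha x).add tendsto_const_nhds).sub (hsum.div_const 4))
    have h2 : ∀ N, srwP N x = AA N x + δ -
        (AA N (x + (1,0)) + AA N (x - (1,0)) + AA N (x + (0,1)) + AA N (x - (0,1))) / 4 := by
      intro N
      have := AA_sum_nbrs N x
      rw [← hδ] at this
      linarith
    rw [show (fun N => srwP N x) = _ from funext h2]
    exact h1
  -- parity: srwP N x vanishes along a subsequence
  set m := (x.1 + x.2).natAbs with hm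
  set r := (m + 1) % 2 with hr
  have hsub : Tendsto (fun k => srwP (2 * k + r) x) atTop
      (nhds (a x + δ - (a (x + (1,0)) + a (x - (1,0)) + a (x + (0,1)) + a (x - (0,1))) / 4)) := by
    refine hsrw.comp ?_
    refine tendsto_atTop_mono (fun k => by omega : ∀ k, k ≤ 2 * k + r) tendsto_id
  have hzero : ∀ k, srwP (2 * k + r) x = 0 := by
    intro k
    refine srwP_parity _ x ?_
    rw [← hm]
    omega
  have hz : Tendsto (fun k => srwP (2 * k + r) x) atTop (nhds 0) := by
    simp only [hzero]; exact tendsto_const_nhds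
  have := tendsto_nhds_unique hsub hz
  rw [hδ] at this ⊢
  linarith

lemma a_one (ha : IsPK a) : a ((1,0) : Z2) = 1 := by
  have h := a_harmonic ha 0
  rw [a_zero ha] at h
  simp only [if_pos rfl] at h
  have e1 : (0 : Z2) + (1,0) = ((1,0) : Z2) := by simp
  have e2 : (0 : Z2) - (1,0) = -((1,0) : Z2) := by simp
  have e3 : (0 : Z2) + (0,1) = ((0,1) : Z2) := by simp
  have e4 : (0 : Z2) - (0,1) = -((0,1) : Z2) := by simp
  rw [e1, e2, e3, e4, a_neg ha, a_neg ha] at h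
  have hs : a ((0,1) : Z2) = a ((1,0) : Z2) := a_swap ha ((1,0) : Z2)
  rw [hs] at h
  norm_num at h
  linarith

lemma a_pos (ha : IsPK a) : ∀ x : Z2, x ≠ 0 → 0 < a x := by
  have main : ∀ n : ℕ, ∀ x : Z2, x ≠ 0 → x.1.natAbs + x.2.natAbs = n → 0 < a x := by
    intro n
    induction n using Nat.strong_induction_on with
    | _ n ih =>
      intro x hx hn
      match n, hn with
      | 0, hn => exact absurd (by obtain ⟨x1,x2⟩ := x; simp [Prod.ext_iff]; omega : x = 0) hx
      | 1, hn =>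
        obtain ⟨x1, x2⟩ := x
        simp only at hn
        have h1 : a ((1,0) : Z2) = 1 := a_one ha
        have hcase : ((x1,x2) : Z2) = (1,0) ∨ ((x1,x2) : Z2) = (-1,0) ∨
            ((x1,x2) : Z2) = (0,1) ∨ ((x1,x2) : Z2) = (0,-1) := by
          simp only [Prod.mk.injEq]; omega
        have hneg1 : a ((-1,0) : Z2) = a ((1,0) : Z2) := by
          have := a_neg ha ((1,0) : Z2); simpa using this
        have hswap : a ((0,1) : Z2) = a ((1,0) : Z2) := a_swap ha ((1,0) : Z2)
        have hneg2 : a ((0,-1) : Z2) = a ((0,1) : Z2) := by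
          have := a_neg ha ((0,1) : Z2); simpa using this
        rcases hcase with h | h | h | h <;> rw [h] <;>
          simp only [hneg1, hswap, hneg2, h1] <;> norm_num
      | (k+2), hn =>
        by_contra hle
        push_neg at hle
        have hax : a x = 0 := le_antisymm hle (a_nonneg ha x)
        have hh := a_harmonic ha x
        rw [if_neg hx, hax] at hh
        have n1 := a_nonneg ha (x + (1,0))
        have n2 := a_nonneg ha (x - (1,0))
        have n3 := a_nonneg ha (x + (0,1))
        have n4 := a_nonneg ha (x - (0,1))
        have z1 : a (x + (1,0)) = 0 := by linarith
        have z2 : a (x - (1,0)) = 0 := by linarith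
        have z3 : a (x + (0,1)) = 0 := by linarith
        have z4 : a (x - (0,1)) = 0 := by linarith
        obtain ⟨x1, x2⟩ := x
        simp only at hn
        -- pick a neighbor strictly closer to 0 and nonzero
        by_cases hx1 : x1 ≠ 0
        · by_cases hp : 0 < x1
          · have hz : ((x1,x2) : Z2) - (1,0) = (x1-1, x2) := by simp [Prod.ext_iff]
            have hne : ((x1-1,x2) : Z2) ≠ 0 ∨ (x1-1,x2) = ((0,0):Z2) := by
              by_cases h : ((x1-1,x2) : Z2) = 0
              · right; simpa using h
              · left; exact h
            rcases hne with h | h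
            · have := ih (k+1) (by omega) ((x1-1,x2) : Z2) h (by simp; omega)
              rw [← hz] at this; linarith
            · -- neighbor is 0, so x = (1,0): but then k+2 = 1, contradiction
              have : x1 = 1 ∧ x2 = 0 := by
                have := congrArg Prod.fst h; have h2 := congrArg Prod.snd h
                simp at this h2; omega
              omega
          · have hneg : x1 < 0 := by omega
            have hz : ((x1,x2) : Z2) + (1,0) = (x1+1, x2) := by simp
            by_cases h : ((x1+1,x2) : Z2) = 0
            · have : x1 = -1 ∧ x2 = 0 := by
                have h1 := congrArg Prod.fst h; have h2 := congrArg Prod.snd h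
                simp at h1 h2; omega
              omega
            · have := ih (k+1) (by omega) ((x1+1,x2) : Z2) h (by simp; omega)
              rw [← hz] at this; linarith
        · push_neg at hx1
          subst hx1
          have hx2 : x2 ≠ 0 := by
            intro h; exact hx (by simp [Prod.ext_iff, h])
          by_cases hp : 0 < x2
          · have hz : (((0:ℤ),x2) : Z2) - (0,1) = (0, x2-1) := by simp [Prod.ext_iff]
            by_cases h : (((0:ℤ),x2-1) : Z2) = 0
            · have : x2 = 1 := by
                have h2 := congrArg Prod.snd h; simp at h2; omega
              omega
            · have := ih (k+1) (by omega) (((0:ℤ),x2-1) : Z2) h (by simp; omega)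
              rw [← hz] at this; linarith
          · have hneg : x2 < 0 := by omega
            have hz : (((0:ℤ),x2) : Z2) + (0,1) = (0, x2+1) := by simp
            by_cases h : (((0:ℤ),x2+1) : Z2) = 0
            · have : x2 = -1 := by
                have h2 := congrArg Prod.snd h; simp at h2; omega
              omega
            · have := ih (k+1) (by omega) (((0:ℤ),x2+1) : Z2) h (by simp; omega)
              rw [← hz] at this; linarith
  intro x hx
  exact main (x.1.natAbs + x.2.natAbs) x hx rfl

lemma summable_fp (x : Z2) : Summable (fun j => fp j x) :=
  summable_of_sum_range_le (fun j => fp_nonneg j x) (fun N => fp_partial_le_one N x)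

lemma fp_tsum_le_one (x : Z2) : ∑' j, fp j x ≤ 1 :=
  Summable.tsum_le_of_sum_range_le (summable_fp x) (fun N => fp_partial_le_one N x)

lemma fp_tsum_one (ha : IsPK a) (x : Z2) : ∑' j, fp j x = 1 := by
  by_contra hne
  have hlt : ∑' j, fp j x < 1 := lt_of_le_of_ne (fp_tsum_le_one x) hne
  set F := ∑' j, fp j x with hF
  have hc : 0 < 1 - F := by linarith
  have hlow : ∀ N, (1 - F) * GN N ≤ AA N x := by
    intro N
    rw [AA_eq]
    have h1 : ∑ j ∈ Finset.range N, fp j x * GN (N - j) ≤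
        ∑ j ∈ Finset.range N, fp j x * GN N :=
      Finset.sum_le_sum fun j _ =>
        mul_le_mul_of_nonneg_left (GN_mono (Nat.sub_le N j)) (fp_nonneg j x)
    have h2 : ∑ j ∈ Finset.range N, fp j x * GN N ≤ F * GN N := by
      rw [← Finset.sum_mul]
      exact mul_le_mul_of_nonneg_right
        (Summable.sum_le_tsum (Finset.range N) (fun j _ => fp_nonneg j x) (summable_fp x))
        (GN_nonneg N)
    nlinarith
  have hdiv : Tendsto (fun N => (1 - F) * GN N) atTop atTop :=
    Tendsto.const_mul_atTop hc GN_unbounded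
  have : Tendsto (fun N => AA N x) atTop atTop := tendsto_atTop_mono hlow hdiv
  exact not_tendsto_nhds_of_tendsto_atTop this (a x) (tendsto_AA ha x)

/-- convolution of the first-passage distribution with a null sequence tends to 0 -/
lemma conv_tendsto (x : Z2) (c : ℕ → ℝ) (D : ℝ) (hD : ∀ n, |c n| ≤ D)
    (hc : Tendsto c atTop (nhds 0)) :
    Tendsto (fun N => ∑ j ∈ Finset.range N, fp j x * c (N - j)) atTop (nhds 0) := by
  have hD0 : 0 ≤ D := le_trans (abs_nonneg _) (hD 0)
  rw [Metric.tendsto_atTop]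
  intro ε hε
  -- choose J for smallness of c
  obtain ⟨J, hJ⟩ := (Metric.tendsto_atTop.mp hc) (ε/2) (by linarith)
  -- choose N1 for smallness of tails of fp
  have hFt : Tendsto (fun N => ∑ j ∈ Finset.range N, fp j x) atTop (nhds (∑' j, fp j x)) :=
    (summable_fp x).hasSum.tendsto_sum_nat
  obtain ⟨N1, hN1⟩ := (Metric.tendsto_atTop.mp hFt) (ε/(4*(D+1))) (by positivity)
  refine ⟨N1 + J + 1, fun N hN => ?_⟩
  have hNJ : N1 ≤ N - J := by omega
  have hJN : N - J ≤ N := by omega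
  rw [Real.dist_eq, sub_zero]
  have habs : |∑ j ∈ Finset.range N, fp j x * c (N - j)| ≤
      ∑ j ∈ Finset.range N, fp j x * |c (N - j)| := by
    refine (Finset.abs_sum_le_sum_abs _ _).trans ?_
    refine le_of_eq (Finset.sum_congr rfl fun j _ => ?_)
    rw [abs_mul, abs_of_nonneg (fp_nonneg j x)]
  have hsplit : ∑ j ∈ Finset.range N, fp j x * |c (N - j)| =
      ∑ j ∈ Finset.Ico 0 (N - J), fp j x * |c (N - j)| +
      ∑ j ∈ Finset.Ico (N - J) N, fp j x * |c (N - j)| := by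
    rw [Finset.range_eq_Ico]
    exact (Finset.sum_Ico_consecutive _ (Nat.zero_le _) hJN).symm
  have hb1 : ∑ j ∈ Finset.Ico 0 (N - J), fp j x * |c (N - j)| ≤ ε/2 := by
    have step : ∀ j ∈ Finset.Ico 0 (N - J), fp j x * |c (N - j)| ≤ fp j x * (ε/2) := by
      intro j hj
      simp only [Finset.mem_Ico] at hj
      have hge : J ≤ N - j := by omega
      have := hJ (N - j) hge
      rw [Real.dist_eq, sub_zero] at this
      exact mul_le_mul_of_nonneg_left (le_of_lt this) (fp_nonneg j x)
    refine (Finset.sum_le_sum step).trans ?_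
    rw [← Finset.sum_mul]
    have : ∑ j ∈ Finset.Ico 0 (N - J), fp j x ≤ 1 := by
      rw [← Finset.range_eq_Ico]
      exact fp_partial_le_one _ x
    nlinarith [Finset.sum_nonneg (fun j (_ : j ∈ Finset.Ico 0 (N - J)) => fp_nonneg j x)]
  have hb2 : ∑ j ∈ Finset.Ico (N - J) N, fp j x * |c (N - j)| ≤ ε/4 := by
    have step : ∀ j ∈ Finset.Ico (N - J) N, fp j x * |c (N - j)| ≤ fp j x * D := by
      intro j _
      exact mul_le_mul_of_nonneg_left (hD _) (fp_nonneg j x)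
    refine (Finset.sum_le_sum step).trans ?_
    rw [← Finset.sum_mul]
    have htail : ∑ j ∈ Finset.Ico (N - J) N, fp j x ≤ ε/(4*(D+1)) := by
      have hsub : ∑ j ∈ Finset.Ico (N - J) N, fp j x =
          ∑ j ∈ Finset.range N, fp j x - ∑ j ∈ Finset.range (N - J), fp j x := by
        rw [Finset.range_eq_Ico]
        rw [← Finset.sum_Ico_consecutive _ (Nat.zero_le (N - J)) hJN]
        rw [Finset.range_eq_Ico]
        ring
      have h2 := hN1 (N - J) hNJ
      rw [Real.dist_eq] at h2
      have ha2 := abs_lt.mp h2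
      have hup : ∑ j ∈ Finset.range N, fp j x ≤ ∑' j, fp j x :=
        Summable.sum_le_tsum _ (fun j _ => fp_nonneg j x) (summable_fp x)
      rw [hsub]
      linarith [ha2.1, hup]
    have hprod : (∑ j ∈ Finset.Ico (N - J) N, fp j x) * D ≤ (ε/(4*(D+1))) * D := by
      exact mul_le_mul_of_nonneg_right htail hD0
    refine hprod.trans ?_
    rw [div_mul_eq_mul_div, div_le_div_iff₀ (by positivity) (by norm_num)]
    nlinarith
  calc |∑ j ∈ Finset.range N, fp j x * c (N - j)|
      ≤ ∑ j ∈ Finset.range N, fp j x * |c (N - j)| := habs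
    _ = _ := hsplit
    _ ≤ ε/2 + ε/4 := add_le_add hb1 hb2
    _ < ε := by linarith

/-- bounded range for a convergent sequence -/
lemma bdd_of_tendsto (c : ℕ → ℝ) (L : ℝ) (hc : Tendsto c atTop (nhds L)) :
    ∃ D, ∀ n, |c n| ≤ D := by
  have habs : Tendsto (fun n => |c n|) atTop (nhds |L|) := hc.abs
  have hb := habs.bddAbove_range
  obtain ⟨D, hD⟩ := hb
  exact ⟨D, fun n => hD (Set.mem_range_self n)⟩

/-- The main limit: partial sums of the killed Green function converge. -/
lemma Qlim (ha : IsPK a) {x y : Z2} (hx : x ≠ 0) (hy : y ≠ 0) :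
    Tendsto (fun N => ∑ n ∈ Finset.range N, qk n x y) atTop
      (nhds (a x + a y - a (x - y))) := by
  -- identity for partial sums
  have key : ∀ N, ∑ n ∈ Finset.range N, qk n x y =
      AA N x - AA N (x - y) +
      (∑ j ∈ Finset.range N, fp j x * a (-y) +
       ∑ j ∈ Finset.range N, fp j x * (AA (N - j) (-y) - a (-y))) := by
    intro N
    have h1 : ∀ n ∈ Finset.range N, qk n x y =
        srwP n (x - y) - ∑ j ∈ Finset.range (n+1), fp j x * srwP (n - j) (-y) := by
      intro n _
      have := fp_decomp hy n x
      linarith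
    rw [Finset.sum_congr rfl h1, Finset.sum_sub_distrib]
    rw [swap_sum (fun i => srwP i (-y)) x N]
    have h2 : ∀ M, ∑ i ∈ Finset.range M, srwP i (-y) = GN M - AA M (-y) := by
      intro M
      rw [AA, GN, Finset.sum_sub_distrib]
      ring
    have h3 : ∑ j ∈ Finset.range N, fp j x * ∑ i ∈ Finset.range (N - j), srwP i (-y) =
        ∑ j ∈ Finset.range N, (fp j x * GN (N - j) - fp j x * AA (N - j) (-y)) := by
      refine Finset.sum_congr rfl fun j _ => ?_
      rw [h2 (N - j)]
      ring
    rw [h3, Finset.sum_sub_distrib]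
    have h4 : ∑ n ∈ Finset.range N, srwP n (x - y) = GN N - AA N (x - y) := by
      rw [AA, GN, Finset.sum_sub_distrib]; ring
    rw [h4]
    have h5 : AA N x = GN N - ∑ j ∈ Finset.range N, fp j x * GN (N - j) := AA_eq N x
    have h6 : ∑ j ∈ Finset.range N, fp j x * AA (N - j) (-y) =
        ∑ j ∈ Finset.range N, fp j x * a (-y) +
        ∑ j ∈ Finset.range N, fp j x * (AA (N - j) (-y) - a (-y)) := by
      rw [← Finset.sum_add_distrib]
      refine Finset.sum_congr rfl fun j _ => ?_
      ring
    rw [← h6]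
    linarith
  rw [show (fun N => ∑ n ∈ Finset.range N, qk n x y) = _ from funext key]
  -- limits of each piece
  have lim1 : Tendsto (fun N => AA N x - AA N (x - y)) atTop (nhds (a x - a (x - y))) :=
    (tendsto_AA ha x).sub (tendsto_AA ha (x - y))
  have lim2 : Tendsto (fun N => ∑ j ∈ Finset.range N, fp j x * a (-y)) atTop (nhds (a (-y))) := by
    have : Tendsto (fun N => (∑ j ∈ Finset.range N, fp j x) * a (-y)) atTop
        (nhds ((∑' j, fp j x) * a (-y))) :=
      ((summable_fp x).hasSum.tendsto_sum_nat).mul_const _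
    rw [fp_tsum_one ha x, one_mul] at this
    convert this using 2 with N
    rw [Finset.sum_mul]
  have lim3 : Tendsto (fun N => ∑ j ∈ Finset.range N, fp j x * (AA (N - j) (-y) - a (-y)))
      atTop (nhds 0) := by
    set c : ℕ → ℝ := fun n => AA n (-y) - a (-y) with hcdef
    have hc : Tendsto c atTop (nhds 0) := by
      have := (tendsto_AA ha (-y)).sub (tendsto_const_nhds (x := a (-y)))
      simpa using this
    obtain ⟨D, hD⟩ := bdd_of_tendsto c 0 hc
    exact conv_tendsto x c D hD hc
  have := lim1.add (lim2.add lim3)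
  rw [add_zero] at this
  have heq : a x - a (x - y) + a (-y) = a x + a y - a (x - y) := by
    rw [a_neg ha y]; ring
  rw [heq] at this
  exact this

lemma summable_qk (ha : IsPK a) {x y : Z2} (hx : x ≠ 0) (hy : y ≠ 0) :
    Summable (fun n => qk n x y) := by
  set L := a x + a y - a (x - y)
  have hmono : Monotone (fun N => ∑ n ∈ Finset.range N, qk n x y) := by
    intro M N h
    exact Finset.sum_le_sum_of_subset_of_nonneg (Finset.range_subset_range.mpr h)
      (fun n _ _ => qk_nonneg n x y)
  have hle : ∀ N, ∑ n ∈ Finset.range N, qk n x y ≤ L :=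
    hmono.ge_of_tendsto (Qlim ha hx hy)
  exact summable_of_sum_range_le (fun n => qk_nonneg n x y) hle

lemma tsum_qk (ha : IsPK a) {x y : Z2} (hx : x ≠ 0) (hy : y ≠ 0) :
    ∑' n, qk n x y = a x + a y - a (x - y) := by
  have h1 := (summable_qk ha hx hy).hasSum.tendsto_sum_nat
  exact tendsto_nhds_unique h1 (Qlim ha hx hy)

lemma phat_eq_qk (ha : IsPK a) :
    ∀ n, ∀ x y : Z2, x ≠ 0 → y ≠ 0 → phat a n x y = a y / a x * qk n x y := by
  intro n
  induction n with
  | zero =>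
    intro x y hx hy
    by_cases h : x = y
    · subst h
      simp [phat, qk, div_self (ne_of_gt (a_pos ha x hx))]
    · simp [phat, qk, h]
  | succ n ih =>
    intro x y hx hy
    have hax : a x ≠ 0 := ne_of_gt (a_pos ha x hx)
    have hstep : phat a (n+1) x y = ∑' z, Phat a x z * phat a n z y := rfl
    rw [hstep]
    have hvan : ∀ z, ¬ nbr x z → Phat a x z * phat a n z y = 0 := by
      intro z hz
      rw [Phat, if_neg (by tauto), zero_mul]
    rw [tsum_four _ x hvan]
    have hterm : ∀ z : Z2, nbr x z →
        Phat a x z * phat a n z y = a y / (4 * a x) * (if z = 0 then 0 else qk n z y) := by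
      intro z hz
      by_cases hz0 : z = 0
      · rw [Phat, if_neg (by tauto), zero_mul, if_pos hz0, mul_zero]
      · have haz : a z ≠ 0 := ne_of_gt (a_pos ha z hz0)
        rw [Phat, if_pos ⟨hz, hx, hz0⟩, ih z y hz0 hy, if_neg hz0]
        field_simp
    rw [hterm _ (nbr_add10 x), hterm _ (nbr_sub10 x), hterm _ (nbr_add01 x), hterm _ (nbr_sub01 x)]
    have hq : qk (n+1) x y =
        ((if x + (1,0) = 0 then 0 else qk n (x + (1,0)) y) +
         (if x - (1,0) = 0 then 0 else qk n (x - (1,0)) y) +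
         (if x + (0,1) = 0 then 0 else qk n (x + (0,1)) y) +
         (if x - (0,1) = 0 then 0 else qk n (x - (0,1)) y)) / 4 := by
      simp only [qk, if_neg hx]
    rw [hq]
    ring

lemma Ghat_eq (ha : IsPK a) {x y : Z2} (hx : x ≠ 0) (hy : y ≠ 0) :
    Ghat a x y = a y / a x * (a x + a y - a (x - y)) := by
  rw [Ghat]
  rw [tsum_congr (fun n => phat_eq_qk ha n x y hx hy)]
  rw [tsum_mul_left, tsum_qk ha hx hy]

end PotKernel
end GF

/-- explicit formula for the Green's function of the conditioned walk. -/
theorem Ghat_formula (a : Z2 → ℝ) (ha : IsPotentialKernel a) :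
    ∀ x y : Z2, x ≠ 0 → y ≠ 0 →
      Ghat a x y = a y / a x * (a x + a y - a (x - y)) := by
  intro x y hx hy
  exact GF.Ghat_eq ha hx hy
end
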